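/- arXiv:1904.13263 — 7 statements merged into one kernel-verified Lean document; each statement's English description precedes it below -/
import Mathlib

section
/- Let $k$ be a field and $n\geq m\geq 2$. Let $V_r$ denote the space of homogeneous polynomials of degree $r-1$ in two variables $X,Y$ over $k$. The map $\theta\colon V_{n-1}\otimes V_{m-1}\to V_n\otimes V_m$ defined by $k$-linear extension of $\theta(f\otimes g)=Xf\otimes Yg - Yf\otimes Xg$ is injective. -/
open MvPolynomial TensorProduct

/-- `Vr k r` is the space of homogeneous polynomials of degree `r - 1`
in the two variables `X = X 0` and `Y = X 1` over `k`. -/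
def Vr (k : Type) [CommRing k] (r : ℕ) : Submodule k (MvPolynomial (Fin 2) k) :=
  homogeneousSubmodule (Fin 2) k (r - 1)

theorem mul_mem_Vr (k : Type) [CommRing k] {a b c : ℕ} (ha : 1 ≤ a) (hb : 1 ≤ b)
    (hc : c = a + b - 1) {f g : MvPolynomial (Fin 2) k}
    (hf : f ∈ Vr k a) (hg : g ∈ Vr k b) : f * g ∈ Vr k c := by
  rw [Vr, mem_homogeneousSubmodule] at hf hg ⊢
  have h := hf.mul hg
  have he : (a - 1) + (b - 1) = c - 1 := by omega
  rwa [he] at h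

theorem X_mem_Vr (k : Type) [CommRing k] (v : Fin 2) : X v ∈ Vr k 2 := by
  have h : (2 : ℕ) - 1 = 1 := rfl
  rw [Vr, h, mem_homogeneousSubmodule]
  exact isHomogeneous_X k v

set_option maxHeartbeats 1000000 in
set_option synthInstance.maxHeartbeats 400000 in
/-- The map `θ(f ⊗ g) = Xf ⊗ Yg - Yf ⊗ Xg` from `V_{n-1} ⊗ V_{m-1}` to `V_n ⊗ V_m`
is injective. -/
theorem theta_injective (k : Type) [Field k] (n m : ℕ) (hm : 2 ≤ m) (hmn : m ≤ n)
    (θ : TensorProduct k (Vr k (n - 1)) (Vr k (m - 1)) →ₗ[k]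
      TensorProduct k (Vr k n) (Vr k m))
    (hθ : ∀ (f : Vr k (n - 1)) (g : Vr k (m - 1)),
      θ (f ⊗ₜ g) =
        (⟨X 0 * f.1, mul_mem_Vr k (by norm_num) (by omega) (by omega)
            (X_mem_Vr k 0) f.2⟩ : Vr k n) ⊗ₜ
          (⟨X 1 * g.1, mul_mem_Vr k (by norm_num) (by omega) (by omega)
            (X_mem_Vr k 1) g.2⟩ : Vr k m)
        - (⟨X 1 * f.1, mul_mem_Vr k (by norm_num) (by omega) (by omega)
            (X_mem_Vr k 1) f.2⟩ : Vr k n) ⊗ₜ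
          (⟨X 0 * g.1, mul_mem_Vr k (by norm_num) (by omega) (by omega)
            (X_mem_Vr k 0) g.2⟩ : Vr k m)) :
    Function.Injective θ := by
  classical
  set P := MvPolynomial (Fin 2) k with hP
  -- P ⊗ P is a domain
  have hnzd : NoZeroDivisors (P ⊗[k] P) := by
    let e := MvPolynomial.algebraTensorAlgEquiv k P (σ := Fin 2)
    exact Function.Injective.noZeroDivisors e e.injective (map_zero e) (map_mul e)
  -- embeddings
  let ι : TensorProduct k (Vr k (n - 1)) (Vr k (m - 1)) →ₗ[k] P ⊗[k] P :=
    TensorProduct.map (Vr k (n - 1)).subtype (Vr k (m - 1)).subtype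
  let ι' : TensorProduct k (Vr k n) (Vr k m) →ₗ[k] P ⊗[k] P :=
    TensorProduct.map (Vr k n).subtype (Vr k m).subtype
  have hι : Function.Injective ι := by
    rw [show ι = TensorProduct.map (Vr k (n - 1)).subtype (Vr k (m - 1)).subtype from rfl,
      ← LinearMap.lTensor_comp_rTensor]
    exact (Module.Flat.lTensor_preserves_injective_linearMap _
        (Vr k (m - 1)).injective_subtype).comp
      (Module.Flat.rTensor_preserves_injective_linearMap _ (Vr k (n - 1)).injective_subtype)
  -- the element w
  set w : P ⊗[k] P := (X 0 : P) ⊗ₜ[k] (X 1 : P) - (X 1 : P) ⊗ₜ[k] (X 0 : P) with hw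
  have hwne : w ≠ 0 := by
    intro h
    have := congrArg (Algebra.TensorProduct.productMap
      (aeval (R := k) (![1, 0] : Fin 2 → k)) (aeval (![0, 1] : Fin 2 → k))) h
    simp [hw, Algebra.TensorProduct.productMap_apply_tmul] at this
  -- commuting square
  have hcomm : ∀ t, ι' (θ t) = w * ι t := by
    intro t
    induction t with
    | zero => simp
    | add a b ha hb => simp [map_add, ha, hb, mul_add]
    | tmul f g =>
      rw [hθ]
      simp only [map_sub, ι', ι, TensorProduct.map_tmul, Submodule.coe_subtype]
      rw [hw, sub_mul, Algebra.TensorProduct.tmul_mul_tmul, Algebra.TensorProduct.tmul_mul_tmul]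
  intro a b hab
  apply hι
  have h1 : w * ι a = w * ι b := by rw [← hcomm, ← hcomm, hab]
  have h2 : w * (ι a - ι b) = 0 := by rw [mul_sub, h1, sub_self]
  rcases mul_eq_zero.mp h2 with h | h
  · exact absurd h hwne
  · exact sub_eq_zero.mp h
end

section
/- Let $k$ be a field of characteristic $p$, and suppose $n\geq m$ and $2\leq m\leq p$. Let $V_r$ denote the homogeneous polynomials of degree $r-1$ in $X,Y$ over $k$. Then the map $\lambda\colon V_n\otimes V_m\to V_{n+1}\otimes V_{m-1}$ defined by $k$-linear extension of $\lambda(f\otimes g)= Xf\otimes \partial g/\partial X + Yf\otimes \partial g/\partial Y$ is surjective. -/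
open MvPolynomial TensorProduct

theorem pderiv_isHomogeneous {k : Type} [CommRing k] {d : ℕ} {φ : MvPolynomial (Fin 2) k}
    (hφ : φ.IsHomogeneous d) (v : Fin 2) : (pderiv v φ).IsHomogeneous (d - 1) := by
  classical
  have hrep : pderiv v φ = ∑ s ∈ φ.support, pderiv v (monomial s (coeff s φ)) := by
    conv_lhs => rw [as_sum φ]
    rw [map_sum]
  rw [← mem_homogeneousSubmodule, hrep]
  apply Submodule.sum_mem
  intro s hs
  rw [pderiv_monomial]
  by_cases h0 : s v = 0
  · simp [h0]
  · rw [mem_homogeneousSubmodule]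
    apply isHomogeneous_monomial
    have hsd : s.degree = d := by
      rw [Finsupp.degree_eq_weight_one]
      exact hφ (mem_support_iff.mp hs)
    have hle : Finsupp.single v 1 ≤ s := Finsupp.single_le_iff.mpr (by omega)
    have key : (s - Finsupp.single v 1) + Finsupp.single v 1 = s := tsub_add_cancel_of_le hle
    have hadd : ((s - Finsupp.single v 1) + Finsupp.single v 1).degree
        = (s - Finsupp.single v 1).degree + (Finsupp.single v 1).degree := by
      simp [Finsupp.degree_eq_weight_one, map_add]
    have hsingle : (Finsupp.single v 1).degree = 1 := by
      exact Finsupp.degree_single v 1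
    rw [key] at hadd
    omega

theorem pderiv_mem_Vr (k : Type) [CommRing k] {r : ℕ} {f : MvPolynomial (Fin 2) k}
    (hf : f ∈ Vr k r) (v : Fin 2) : pderiv v f ∈ Vr k (r - 1) := by
  rw [Vr, mem_homogeneousSubmodule] at hf ⊢
  exact pderiv_isHomogeneous hf v

/-! ### Auxiliary lemmas -/

theorem mono_mem_Vr (k : Type) [CommRing k] {r i e : ℕ} (h : i + e + 1 = r) :
    (X 0:MvPolynomial (Fin 2) k) ^ i * X 1 ^ e ∈ Vr k r := by
  rw [Vr, mem_homogeneousSubmodule]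
  have := ((isHomogeneous_X k (0:Fin 2)).pow i).mul ((isHomogeneous_X k (1:Fin 2)).pow e)
  convert this using 1
  omega

theorem pd0 (k : Type) [CommRing k] (a b : ℕ) :
    pderiv (0:Fin 2) ((X 0:MvPolynomial (Fin 2) k)^a * X 1^b) = (a:k) • (X 0^(a-1) * X 1^b) := by
  simp [pderiv_mul, pderiv_pow, pderiv_X_self, pderiv_X_of_ne, smul_eq_C_mul]; ring

theorem pd1 (k : Type) [CommRing k] (a b : ℕ) :
    pderiv (1:Fin 2) ((X 0:MvPolynomial (Fin 2) k)^a * X 1^b) = (b:k) • (X 0^a * X 1^(b-1)) := by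
  simp [pderiv_mul, pderiv_pow, pderiv_X_self, pderiv_X_of_ne, smul_eq_C_mul]; ring

theorem homog_mem_span (k : Type) [CommRing k] {d : ℕ} {φ : MvPolynomial (Fin 2) k}
    (h : φ.IsHomogeneous d) :
    φ ∈ Submodule.span k {q : MvPolynomial (Fin 2) k | ∃ i e, i + e = d ∧ q = X 0 ^ i * X 1 ^ e} := by
  rw [as_sum φ]
  refine Submodule.sum_mem _ fun s hs => ?_
  have hd : s 0 + s 1 = d := by
    have := h (mem_support_iff.mp hs)
    simpa [Finsupp.weight_apply, Finsupp.sum_fintype, Fin.sum_univ_two] using this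
  rw [monomial_eq, Finsupp.prod_fintype _ _ (fun i => pow_zero _), Fin.prod_univ_two,
    ← smul_eq_C_mul]
  exact Submodule.smul_mem _ _ (Submodule.subset_span ⟨s 0, s 1, hd, rfl⟩)

theorem mem_span_subtype {k M : Type} [CommRing k] [AddCommGroup M] [Module k M]
    (N : Submodule k M) (S : Set M) (hS : S ⊆ N) (x : N) (hx : (x : M) ∈ Submodule.span k S) :
    x ∈ Submodule.span k {y : N | (y : M) ∈ S} := by
  have h1 : S ⊆ (N.subtype '' {y : N | (y : M) ∈ S}) := fun s hs => ⟨⟨s, hS hs⟩, hs, rfl⟩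
  have h2 : (x : M) ∈ Submodule.span k (N.subtype '' {y : N | (y : M) ∈ S}) :=
    Submodule.span_mono h1 hx
  rw [← Submodule.map_span] at h2
  obtain ⟨a, ha, hax⟩ := h2
  have : a = x := Subtype.ext hax
  rwa [this] at ha

theorem span_pair_tmul {R M N : Type} [CommRing R] [AddCommGroup M] [AddCommGroup N]
    [Module R M] [Module R N] {A : Set M} {B : Set N} {P : Submodule R (M ⊗[R] N)}
    (h : ∀ a ∈ A, ∀ b ∈ B, a ⊗ₜ[R] b ∈ P) :
    ∀ x ∈ Submodule.span R A, ∀ y ∈ Submodule.span R B, x ⊗ₜ[R] y ∈ P := by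
  intro x hx
  induction hx using Submodule.span_induction with
  | mem a ha =>
    intro y hy
    induction hy using Submodule.span_induction with
    | mem b hb => exact h a ha b hb
    | zero => simp only [TensorProduct.tmul_zero]; exact P.zero_mem
    | add b c _ _ hb hc => rw [TensorProduct.tmul_add]; exact P.add_mem hb hc
    | smul r b _ hb => rw [TensorProduct.tmul_smul]; exact P.smul_mem r hb
  | zero => intro y hy; simp only [TensorProduct.zero_tmul]; exact P.zero_mem
  | add a b _ _ ha hb => intro y hy; rw [TensorProduct.add_tmul]; exact P.add_mem (ha y hy) (hb y hy)
  | smul r a _ ha => intro y hy; rw [← TensorProduct.smul_tmul']; exact P.smul_mem r (ha y hy)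

theorem range_solve₂ {R M N : Type} [Field R] [AddCommGroup M] [AddCommGroup N]
    [Module R M] [Module R N] {f : M →ₗ[R] N} {x : M} {c1 c2 : R} {A B : N}
    (e : f x = c1 • A + c2 • B) (hA : A ∈ LinearMap.range f) (hc : c2 ≠ 0) :
    B ∈ LinearMap.range f := by
  have hB : B = c2⁻¹ • (f x - c1 • A) := by
    rw [e, add_sub_cancel_left, smul_smul, inv_mul_cancel₀ hc, one_smul]
  rw [hB]
  exact Submodule.smul_mem _ _ (Submodule.sub_mem _ (LinearMap.mem_range_self f x)
    (Submodule.smul_mem _ _ hA))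

theorem range_solve₁ {R M N : Type} [Field R] [AddCommGroup M] [AddCommGroup N]
    [Module R M] [Module R N] {f : M →ₗ[R] N} {x : M} {c1 c2 : R} {A B : N}
    (e : f x = c1 • B + c2 • A) (hA : A ∈ LinearMap.range f) (hc : c1 ≠ 0) :
    B ∈ LinearMap.range f :=
  range_solve₂ (e.trans (add_comm _ _)) hA hc

theorem range_solve₀ {R M N : Type} [Field R] [AddCommGroup M] [AddCommGroup N]
    [Module R M] [Module R N] {f : M →ₗ[R] N} {x : M} {c : R} {B : N}
    (e : f x = c • B) (hc : c ≠ 0) : B ∈ LinearMap.range f := by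
  have hB : B = c⁻¹ • f x := by rw [e, smul_smul, inv_mul_cancel₀ hc, one_smul]
  rw [hB]
  exact Submodule.smul_mem _ _ (LinearMap.mem_range_self f x)

theorem E1' (k : Type) [Field k] (n m : ℕ) (hm2 : 2 ≤ m) (hmn : m ≤ n) (i j : ℕ)
    (hi : i ≤ n - 1) (hj1 : 1 ≤ j) (hj : j ≤ m - 2) :
    ((⟨X 0 * ((X 0:MvPolynomial (Fin 2) k) ^ i * X 1 ^ (n - 1 - i)),
        by rw [show (X 0:MvPolynomial (Fin 2) k) * (X 0 ^ i * X 1 ^ (n-1-i)) = X 0^(i+1)*X 1^(n-1-i) by ring]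
           exact mono_mem_Vr k (by omega)⟩ : Vr k (n + 1)) ⊗ₜ[k]
      (⟨pderiv 0 ((X 0:MvPolynomial (Fin 2) k) ^ j * X 1 ^ (m - 1 - j)),
        by rw [pd0]; exact Submodule.smul_mem _ _ (mono_mem_Vr k (by omega))⟩ : Vr k (m - 1)))
    + ((⟨X 1 * ((X 0:MvPolynomial (Fin 2) k) ^ i * X 1 ^ (n - 1 - i)),
        by rw [show (X 1:MvPolynomial (Fin 2) k) * (X 0 ^ i * X 1 ^ (n-1-i)) = X 0^i*X 1^(n-i) by
             rw [show n - i = (n-1-i)+1 by omega]; ring]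
           exact mono_mem_Vr k (by omega)⟩ : Vr k (n + 1)) ⊗ₜ[k]
      (⟨pderiv 1 ((X 0:MvPolynomial (Fin 2) k) ^ j * X 1 ^ (m - 1 - j)),
        by rw [pd1]; exact Submodule.smul_mem _ _ (mono_mem_Vr k (by omega))⟩ : Vr k (m - 1)))
    = ((j:ℕ):k) • ((⟨X 0 ^ (i+1) * X 1 ^ (n - (i+1)), mono_mem_Vr k (by omega)⟩ : Vr k (n + 1)) ⊗ₜ[k]
        (⟨X 0 ^ (j-1) * X 1 ^ (m - 2 - (j-1)), mono_mem_Vr k (by omega)⟩ : Vr k (m - 1)))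
    + (((m-1-j:ℕ)):k) • ((⟨X 0 ^ i * X 1 ^ (n - i), mono_mem_Vr k (by omega)⟩ : Vr k (n + 1)) ⊗ₜ[k]
        (⟨X 0 ^ j * X 1 ^ (m - 2 - j), mono_mem_Vr k (by omega)⟩ : Vr k (m - 1))) := by
  refine congrArg₂ (· + ·) ?_ ?_
  · rw [← TensorProduct.tmul_smul]
    refine congrArg₂ (· ⊗ₜ[k] ·) (Subtype.ext ?_) (Subtype.ext ?_)
    · show (X 0:MvPolynomial (Fin 2) k) * (X 0 ^ i * X 1 ^ (n-1-i)) = X 0^(i+1)*X 1^(n-(i+1))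
      rw [show n - (i+1) = n - 1 - i by omega]; ring
    · show pderiv 0 ((X 0:MvPolynomial (Fin 2) k) ^ j * X 1 ^ (m - 1 - j))
        = (j:k) • (X 0 ^ (j-1) * X 1 ^ (m - 2 - (j-1)))
      rw [pd0, show m - 2 - (j-1) = m - 1 - j by omega]
  · rw [← TensorProduct.tmul_smul]
    refine congrArg₂ (· ⊗ₜ[k] ·) (Subtype.ext ?_) (Subtype.ext ?_)
    · show (X 1:MvPolynomial (Fin 2) k) * (X 0 ^ i * X 1 ^ (n-1-i)) = X 0^i*X 1^(n-i)
      rw [show n - i = (n-1-i)+1 by omega]; ring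
    · show pderiv 1 ((X 0:MvPolynomial (Fin 2) k) ^ j * X 1 ^ (m - 1 - j))
        = ((m-1-j:ℕ):k) • (X 0 ^ j * X 1 ^ (m - 2 - j))
      rw [pd1, show m - 2 - j = m - 1 - j - 1 by omega]

theorem E0' (k : Type) [Field k] (n m : ℕ) (hm2 : 2 ≤ m) (hmn : m ≤ n) (i : ℕ)
    (hi : i ≤ n - 1) :
    ((⟨X 0 * ((X 0:MvPolynomial (Fin 2) k) ^ i * X 1 ^ (n - 1 - i)),
        by rw [show (X 0:MvPolynomial (Fin 2) k) * (X 0 ^ i * X 1 ^ (n-1-i)) = X 0^(i+1)*X 1^(n-1-i) by ring]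
           exact mono_mem_Vr k (by omega)⟩ : Vr k (n + 1)) ⊗ₜ[k]
      (⟨pderiv 0 ((X 0:MvPolynomial (Fin 2) k) ^ 0 * X 1 ^ (m - 1 - 0)),
        pderiv_mem_Vr k (mono_mem_Vr k (by omega)) 0⟩ : Vr k (m - 1)))
    + ((⟨X 1 * ((X 0:MvPolynomial (Fin 2) k) ^ i * X 1 ^ (n - 1 - i)),
        by rw [show (X 1:MvPolynomial (Fin 2) k) * (X 0 ^ i * X 1 ^ (n-1-i)) = X 0^i*X 1^(n-i) by
             rw [show n - i = (n-1-i)+1 by omega]; ring]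
           exact mono_mem_Vr k (by omega)⟩ : Vr k (n + 1)) ⊗ₜ[k]
      (⟨pderiv 1 ((X 0:MvPolynomial (Fin 2) k) ^ 0 * X 1 ^ (m - 1 - 0)),
        pderiv_mem_Vr k (mono_mem_Vr k (by omega)) 1⟩ : Vr k (m - 1)))
    = (((m-1-0:ℕ)):k) • ((⟨X 0 ^ i * X 1 ^ (n - i), mono_mem_Vr k (by omega)⟩ : Vr k (n + 1)) ⊗ₜ[k]
        (⟨X 0 ^ 0 * X 1 ^ (m - 2 - 0), mono_mem_Vr k (by omega)⟩ : Vr k (m - 1))) := by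
  have h1 : (⟨pderiv 0 ((X 0:MvPolynomial (Fin 2) k) ^ 0 * X 1 ^ (m - 1 - 0)),
      pderiv_mem_Vr k (mono_mem_Vr k (by omega)) 0⟩ : Vr k (m - 1)) = 0 := by
    refine Subtype.ext ?_
    simp [pd0]
  rw [h1, TensorProduct.tmul_zero, zero_add, ← TensorProduct.tmul_smul]
  refine congrArg₂ (· ⊗ₜ[k] ·) (Subtype.ext ?_) (Subtype.ext ?_)
  · show (X 1:MvPolynomial (Fin 2) k) * (X 0 ^ i * X 1 ^ (n-1-i)) = X 0^i*X 1^(n-i)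
    rw [show n - i = (n-1-i)+1 by omega]; ring
  · show pderiv 1 ((X 0:MvPolynomial (Fin 2) k) ^ 0 * X 1 ^ (m - 1 - 0))
      = ((m-1-0:ℕ):k) • (X 0 ^ 0 * X 1 ^ (m - 2 - 0))
    rw [pd1, show m - 2 - 0 = m - 1 - 0 - 1 by omega]

theorem E2' (k : Type) [Field k] (n m : ℕ) (hm2 : 2 ≤ m) (hmn : m ≤ n) (i : ℕ)
    (hi : i ≤ n - 1) :
    ((⟨X 0 * ((X 0:MvPolynomial (Fin 2) k) ^ i * X 1 ^ (n - 1 - i)),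
        by rw [show (X 0:MvPolynomial (Fin 2) k) * (X 0 ^ i * X 1 ^ (n-1-i)) = X 0^(i+1)*X 1^(n-1-i) by ring]
           exact mono_mem_Vr k (by omega)⟩ : Vr k (n + 1)) ⊗ₜ[k]
      (⟨pderiv 0 ((X 0:MvPolynomial (Fin 2) k) ^ (m-1) * X 1 ^ (m - 1 - (m-1))),
        pderiv_mem_Vr k (mono_mem_Vr k (by omega)) 0⟩ : Vr k (m - 1)))
    + ((⟨X 1 * ((X 0:MvPolynomial (Fin 2) k) ^ i * X 1 ^ (n - 1 - i)),
        by rw [show (X 1:MvPolynomial (Fin 2) k) * (X 0 ^ i * X 1 ^ (n-1-i)) = X 0^i*X 1^(n-i) by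
             rw [show n - i = (n-1-i)+1 by omega]; ring]
           exact mono_mem_Vr k (by omega)⟩ : Vr k (n + 1)) ⊗ₜ[k]
      (⟨pderiv 1 ((X 0:MvPolynomial (Fin 2) k) ^ (m-1) * X 1 ^ (m - 1 - (m-1))),
        pderiv_mem_Vr k (mono_mem_Vr k (by omega)) 1⟩ : Vr k (m - 1)))
    = (((m-1:ℕ)):k) • ((⟨X 0 ^ (i+1) * X 1 ^ (n - (i+1)), mono_mem_Vr k (by omega)⟩ : Vr k (n + 1)) ⊗ₜ[k]
        (⟨X 0 ^ (m-2) * X 1 ^ (m - 2 - (m-2)), mono_mem_Vr k (by omega)⟩ : Vr k (m - 1))) := by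
  have h2 : (⟨pderiv 1 ((X 0:MvPolynomial (Fin 2) k) ^ (m-1) * X 1 ^ (m - 1 - (m-1))),
      pderiv_mem_Vr k (mono_mem_Vr k (by omega)) 1⟩ : Vr k (m - 1)) = 0 := by
    refine Subtype.ext ?_
    simp [pd1, Nat.sub_self]
  rw [h2, TensorProduct.tmul_zero, add_zero, ← TensorProduct.tmul_smul]
  refine congrArg₂ (· ⊗ₜ[k] ·) (Subtype.ext ?_) (Subtype.ext ?_)
  · show (X 0:MvPolynomial (Fin 2) k) * (X 0 ^ i * X 1 ^ (n-1-i)) = X 0^(i+1)*X 1^(n-(i+1))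
    rw [show n - (i+1) = n - 1 - i by omega]; ring
  · show pderiv 0 ((X 0:MvPolynomial (Fin 2) k) ^ (m-1) * X 1 ^ (m - 1 - (m-1)))
      = ((m-1:ℕ):k) • (X 0 ^ (m-2) * X 1 ^ (m - 2 - (m-2)))
    rw [pd0, show m - 1 - 1 = m - 2 by omega, show m - 1 - (m-1) = m - 2 - (m-2) by omega]

set_option maxHeartbeats 1000000 in
set_option synthInstance.maxHeartbeats 400000 in
/-- The map `λ(f ⊗ g) = Xf ⊗ ∂g/∂X + Yf ⊗ ∂g/∂Y : V_n ⊗ V_m → V_{n+1} ⊗ V_{m-1}`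
is surjective, for `n ≥ m` and `2 ≤ m ≤ p` in characteristic `p`. -/
theorem lambda_surjective (p : ℕ) (hp : p.Prime) (k : Type) [Field k] [CharP k p]
    (n m : ℕ) (hm2 : 2 ≤ m) (hmp : m ≤ p) (hmn : m ≤ n)
    (lam : TensorProduct k (Vr k n) (Vr k m) →ₗ[k]
      TensorProduct k (Vr k (n + 1)) (Vr k (m - 1)))
    (hlam : ∀ (f : Vr k n) (g : Vr k m),
      lam (f ⊗ₜ g) =
        (⟨X 0 * f.1, mul_mem_Vr k (by norm_num) (by omega) (by omega)
            (X_mem_Vr k 0) f.2⟩ : Vr k (n + 1)) ⊗ₜ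
          (⟨pderiv 0 g.1, pderiv_mem_Vr k g.2 0⟩ : Vr k (m - 1))
        + (⟨X 1 * f.1, mul_mem_Vr k (by norm_num) (by omega) (by omega)
            (X_mem_Vr k 1) f.2⟩ : Vr k (n + 1)) ⊗ₜ
          (⟨pderiv 1 g.1, pderiv_mem_Vr k g.2 1⟩ : Vr k (m - 1))) :
    Function.Surjective lam := by
  have hne : ∀ x : ℕ, 0 < x → x < p → ((x:ℕ):k) ≠ 0 := by
    intro x h1 h2 h0
    have hd := (CharP.cast_eq_zero_iff k p x).mp h0
    have := Nat.le_of_dvd h1 hd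
    omega
  have rs0 : ∀ (x : TensorProduct k (Vr k n) (Vr k m)) (c : k)
      (B : TensorProduct k (Vr k (n+1)) (Vr k (m-1))),
      lam x = c • B → c ≠ 0 → B ∈ LinearMap.range lam :=
    fun x c B e hc => range_solve₀ (R := k) (M := TensorProduct k (Vr k n) (Vr k m))
      (N := TensorProduct k (Vr k (n+1)) (Vr k (m-1))) (f := lam) (x := x) (c := c) (B := B) e hc
  have rs1 : ∀ (x : TensorProduct k (Vr k n) (Vr k m)) (c1 c2 : k)
      (A B : TensorProduct k (Vr k (n+1)) (Vr k (m-1))),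
      lam x = c1 • B + c2 • A → A ∈ LinearMap.range lam → c1 ≠ 0 →
      B ∈ LinearMap.range lam :=
    fun x c1 c2 A B e hA hc => range_solve₁ (R := k) (M := TensorProduct k (Vr k n) (Vr k m))
      (N := TensorProduct k (Vr k (n+1)) (Vr k (m-1))) (f := lam) (x := x) (c1 := c1) (c2 := c2)
      (A := A) (B := B) e hA hc
  have rs2 : ∀ (x : TensorProduct k (Vr k n) (Vr k m)) (c1 c2 : k)
      (A B : TensorProduct k (Vr k (n+1)) (Vr k (m-1))),
      lam x = c1 • A + c2 • B → A ∈ LinearMap.range lam → c2 ≠ 0 →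
      B ∈ LinearMap.range lam :=
    fun x c1 c2 A B e hA hc => range_solve₂ (R := k) (M := TensorProduct k (Vr k n) (Vr k m))
      (N := TensorProduct k (Vr k (n+1)) (Vr k (m-1))) (f := lam) (x := x) (c1 := c1) (c2 := c2)
      (A := A) (B := B) e hA hc
  -- L1 : the case i + j ≤ m - 2
  have L1 : ∀ (j i : ℕ) (_hij : i + j ≤ m - 2),
      ((⟨X 0 ^ i * X 1 ^ (n - i), mono_mem_Vr k (by omega)⟩ : Vr k (n + 1)) ⊗ₜ[k]
        (⟨X 0 ^ j * X 1 ^ (m - 2 - j), mono_mem_Vr k (by omega)⟩ : Vr k (m - 1)))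
        ∈ LinearMap.range lam := by
    intro j
    induction j with
    | zero =>
      intro i hij
      have e := (hlam ⟨X 0 ^ i * X 1 ^ (n - 1 - i), mono_mem_Vr k (by omega)⟩
          ⟨X 0 ^ 0 * X 1 ^ (m - 1 - 0), mono_mem_Vr k (by omega)⟩).trans
        (E0' k n m hm2 hmn i (by omega))
      have hc : ((m-1-0:ℕ):k) ≠ 0 := hne _ (by omega) (by omega)
      exact rs0 _ _ _ e hc
    | succ j ih =>
      intro i hij
      have e := (hlam ⟨X 0 ^ i * X 1 ^ (n - 1 - i), mono_mem_Vr k (by omega)⟩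
          ⟨X 0 ^ (j+1) * X 1 ^ (m - 1 - (j+1)), mono_mem_Vr k (by omega)⟩).trans
        (E1' k n m hm2 hmn i (j+1) (by omega) (by omega) (by omega))
      have hc : ((m-1-(j+1):ℕ):k) ≠ 0 := hne _ (by omega) (by omega)
      exact rs2 _ _ _ _ _ e (ih (i+1) (by omega)) hc
  -- L2 : the case i + j ≥ m - 1, descending induction via d = m - 2 - j
  have L2 : ∀ (d i j : ℕ) (_hd : j + d = m - 2) (_hij : m - 1 ≤ i + j) (_hi : i ≤ n),
      ((⟨X 0 ^ i * X 1 ^ (n - i), mono_mem_Vr k (by omega)⟩ : Vr k (n + 1)) ⊗ₜ[k]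
        (⟨X 0 ^ j * X 1 ^ (m - 2 - j), mono_mem_Vr k (by omega)⟩ : Vr k (m - 1)))
        ∈ LinearMap.range lam := by
    intro d
    induction d with
    | zero =>
      intro i j hd hij hi
      obtain rfl : j = m - 2 := by omega
      obtain ⟨i', rfl⟩ : ∃ i', i = i' + 1 := ⟨i - 1, by omega⟩
      have e := (hlam ⟨X 0 ^ i' * X 1 ^ (n - 1 - i'), mono_mem_Vr k (by omega)⟩
          ⟨X 0 ^ (m-1) * X 1 ^ (m - 1 - (m-1)), mono_mem_Vr k (by omega)⟩).trans
        (E2' k n m hm2 hmn i' (by omega))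
      have hc : ((m-1:ℕ):k) ≠ 0 := hne _ (by omega) (by omega)
      exact rs0 _ _ _ e hc
    | succ d ih =>
      intro i j hd hij hi
      obtain ⟨i', rfl⟩ : ∃ i', i = i' + 1 := ⟨i - 1, by omega⟩
      have e := (hlam ⟨X 0 ^ i' * X 1 ^ (n - 1 - i'), mono_mem_Vr k (by omega)⟩
          ⟨X 0 ^ (j+1) * X 1 ^ (m - 1 - (j+1)), mono_mem_Vr k (by omega)⟩).trans
        (E1' k n m hm2 hmn i' (j+1) (by omega) (by omega) (by omega))
      have hc : ((j+1:ℕ):k) ≠ 0 := hne _ (by omega) (by omega)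
      exact rs1 _ _ _ _ _ e (ih i' (j+1) (by omega) (by omega) (by omega)) hc
  have key : ∀ (i j : ℕ) (hi : i ≤ n) (hj : j ≤ m - 2),
      ((⟨X 0 ^ i * X 1 ^ (n - i), mono_mem_Vr k (by omega)⟩ : Vr k (n + 1)) ⊗ₜ[k]
        (⟨X 0 ^ j * X 1 ^ (m - 2 - j), mono_mem_Vr k (by omega)⟩ : Vr k (m - 1)))
        ∈ LinearMap.range lam := by
    intro i j hi hj
    by_cases h : i + j ≤ m - 2
    · exact L1 j i h
    · exact L2 (m - 2 - j) i j (by omega) (by omega) hi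
  -- now the span argument
  rw [← LinearMap.range_eq_top, ← top_le_iff, ← span_tmul_eq_top, Submodule.span_le]
  rintro t ⟨u, v, rfl⟩
  have hu : u ∈ Submodule.span k {y : Vr k (n+1) |
      (y : MvPolynomial (Fin 2) k) ∈ {q : MvPolynomial (Fin 2) k | ∃ i e, i + e = n ∧ q = X 0 ^ i * X 1 ^ e}} := by
    refine mem_span_subtype _ _ ?_ u (homog_mem_span k u.2)
    rintro q ⟨i, e, hie, rfl⟩
    exact mono_mem_Vr k (by omega)
  have hv : v ∈ Submodule.span k {y : Vr k (m-1) |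
      (y : MvPolynomial (Fin 2) k) ∈ {q : MvPolynomial (Fin 2) k | ∃ i e, i + e = m - 2 ∧ q = X 0 ^ i * X 1 ^ e}} := by
    refine mem_span_subtype _ _ ?_ v (homog_mem_span k v.2)
    rintro q ⟨i, e, hie, rfl⟩
    exact mono_mem_Vr k (by omega)
  refine span_pair_tmul ?_ u hu v hv
  rintro a ⟨i, e, hie, ha⟩ b ⟨j, f, hjf, hb⟩
  have ha' : a = (⟨X 0 ^ i * X 1 ^ (n - i), mono_mem_Vr k (by omega)⟩ : Vr k (n + 1)) := by
    refine Subtype.ext ?_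
    show (a : MvPolynomial (Fin 2) k) = X 0 ^ i * X 1 ^ (n - i)
    rw [ha, show e = n - i by omega]
  have hb' : b = (⟨X 0 ^ j * X 1 ^ (m - 2 - j), mono_mem_Vr k (by omega)⟩ : Vr k (m - 1)) := by
    refine Subtype.ext ?_
    show (b : MvPolynomial (Fin 2) k) = X 0 ^ j * X 1 ^ (m - 2 - j)
    rw [hb, show f = m - 2 - j by omega]
  rw [ha', hb']
  exact key i j (by omega) (by omega)
end

section
/- Let $p$ be an odd prime and $n$ odd with $1<n<p-1$. In the graph $\mathcal{G}^{(n)}$ on $\{1,\dots,p-1\}$ with $i\sim j$ iff ($i+j+n$ odd, $i+j+n<2p$, $n<i+j$, $i<j+n$, $j<n+i$), any two odd vertices are joined by a path, any two even vertices are joined by a path, and no odd vertex is joined to an even vertex; that is, $\mathcal{G}^{(n)}$ has exactly two connected components, the odd vertices and the even vertices. -/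
/-- Adjacency (possibly a loop) in the graph `𝒢⁽ⁿ⁾`: `V_j` is a non-projective
indecomposable summand of `V_i ⊗ V_n`. -/
def adjCond (p n i j : ℕ) : Prop :=
  Odd (i + j + n) ∧ i + j + n < 2 * p ∧ n < i + j ∧ i < j + n ∧ j < n + i

private lemma adj_symm {p n i j : ℕ} (h : adjCond p n i j) : adjCond p n j i := by
  obtain ⟨h1, h2, h3, h4, h5⟩ := h
  exact ⟨by rwa [show j + i + n = i + j + n by ring], by omega, by omega, by omega, by omega⟩

private lemma rtg_symm {p n i j : ℕ} (h : Relation.ReflTransGen (adjCond p n) i j) :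
    Relation.ReflTransGen (adjCond p n) j i := by
  induction h with
  | refl => exact .refl
  | tail _ hbc ih => exact Relation.ReflTransGen.head (adj_symm hbc) ih

private lemma rtg_parity {p n i j : ℕ} (hnodd : Odd n)
    (h : Relation.ReflTransGen (adjCond p n) i j) : i % 2 = j % 2 := by
  induction h with
  | refl => rfl
  | tail _ hbc ih =>
    obtain ⟨ho, _⟩ := hbc
    rw [Nat.odd_iff] at ho
    rw [Nat.odd_iff] at hnodd
    omega

private lemma step (p n : ℕ) (hn : 3 ≤ n) (hnp : n + 2 ≤ p) (i : ℕ)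
    (hi : 1 ≤ i) (hip : i + 3 ≤ p) :
    Relation.ReflTransGen (adjCond p n) i (i + 2) := by
  by_cases h : i < n
  · have h1 : adjCond p n i (n + 1 - i) :=
      ⟨⟨n, by omega⟩, by omega, by omega, by omega, by omega⟩
    have h2 : adjCond p n (n + 1 - i) (i + 2) :=
      ⟨⟨n + 1, by omega⟩, by omega, by omega, by omega, by omega⟩
    exact Relation.ReflTransGen.head h1 (Relation.ReflTransGen.single h2)
  · have h1 : adjCond p n i (i - n + 3) :=
      ⟨⟨i + 1, by omega⟩, by omega, by omega, by omega, by omega⟩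
    have h2 : adjCond p n (i - n + 3) (i + 2) :=
      ⟨⟨i + 2, by omega⟩, by omega, by omega, by omega, by omega⟩
    exact Relation.ReflTransGen.head h1 (Relation.ReflTransGen.single h2)

private lemma conn (p n : ℕ) (hn : 3 ≤ n) (hnp : n + 2 ≤ p) :
    ∀ d i, 1 ≤ i → i + 2 * d + 1 ≤ p →
      Relation.ReflTransGen (adjCond p n) i (i + 2 * d) := by
  intro d
  induction d with
  | zero => intro i _ _; simpa using Relation.ReflTransGen.refl
  | succ k ih =>
    intro i hi hle
    have h1 := step p n hn hnp i hi (by omega)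
    have h2 := ih (i + 2) (by omega) (by omega)
    have e : i + 2 * (k + 1) = i + 2 + 2 * k := by ring
    rw [e]
    exact h1.trans h2

private lemma conn_pair (p n : ℕ) (hn : 3 ≤ n) (hnp : n + 2 ≤ p)
    (i j : ℕ) (hi : 1 ≤ i) (hip : i ≤ p - 1) (hj : 1 ≤ j) (hjp : j ≤ p - 1)
    (hpar : i % 2 = j % 2) : Relation.ReflTransGen (adjCond p n) i j := by
  rcases le_total i j with hle | hle
  · obtain ⟨d, hd⟩ : ∃ d, j = i + 2 * d := ⟨(j - i) / 2, by omega⟩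
    subst hd
    exact conn p n hn hnp d i hi (by omega)
  · obtain ⟨d, hd⟩ : ∃ d, i = j + 2 * d := ⟨(i - j) / 2, by omega⟩
    subst hd
    exact rtg_symm (conn p n hn hnp d j hj (by omega))

theorem two_components_of_odd (p n : ℕ) (hp : p.Prime) (hodd : Odd p)
    (hnodd : Odd n) (hn1 : 1 < n) (hn2 : n < p - 1) :
    (∀ i j : ℕ, 1 ≤ i → i ≤ p - 1 → 1 ≤ j → j ≤ p - 1 → Odd i → Odd j →
      Relation.ReflTransGen (adjCond p n) i j) ∧
    (∀ i j : ℕ, 1 ≤ i → i ≤ p - 1 → 1 ≤ j → j ≤ p - 1 → Even i → Even j →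
      Relation.ReflTransGen (adjCond p n) i j) ∧
    (∀ i j : ℕ, 1 ≤ i → i ≤ p - 1 → 1 ≤ j → j ≤ p - 1 → Odd i → Even j →
      ¬ Relation.ReflTransGen (adjCond p n) i j) := by
  have hp2 := hp.two_le
  obtain ⟨a, ha⟩ := hodd
  obtain ⟨b, hb⟩ := hnodd
  have hn3 : 3 ≤ n := by omega
  have hnp : n + 2 ≤ p := by omega
  refine ⟨?_, ?_, ?_⟩
  · intro i j hi hip hj hjp hoi hoj
    rw [Nat.odd_iff] at hoi hoj
    exact conn_pair p n hn3 hnp i j hi hip hj hjp (by omega)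
  · intro i j hi hip hj hjp hei hej
    rw [Nat.even_iff] at hei hej
    exact conn_pair p n hn3 hnp i j hi hip hj hjp (by omega)
  · intro i j hi hip hj hjp hoi hej hrtg
    have := rtg_parity (by exact ⟨b, hb⟩) hrtg
    rw [Nat.odd_iff] at hoi
    rw [Nat.even_iff] at hej
    omega
end

section
/- Let $p$ be an odd prime, $1\leq n\leq p-1$, and for $1\leq i\leq p-1$ let $d(i)$ be the number of $j\in\{1,\dots,p-1\}$ such that $i+j+n$ is odd, $i+j+n<2p$, $n<i+j$, $i<j+n$, and $j<n+i$. Then $d(i)=\min\{i,\,p-i,\,n,\,p-n\}$. -/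
instance (p n i j : ℕ) : Decidable (adjCond p n i j) := by
  unfold adjCond; infer_instance

set_option maxHeartbeats 1000000 in
theorem degree_eq_min (p n : ℕ) (hp : p.Prime) (hodd : Odd p)
    (hn1 : 1 ≤ n) (hn2 : n ≤ p - 1) (i : ℕ) (hi1 : 1 ≤ i) (hi2 : i ≤ p - 1) :
    ((Finset.Icc 1 (p - 1)).filter (fun j => adjCond p n i j)).card
      = min (min i (p - i)) (min n (p - n)) := by
  obtain ⟨t, ht⟩ := hodd
  have hp2 : 2 ≤ p := hp.two_le
  set a : ℕ := max i n - min i n with ha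
  set m : ℕ := min (min i (p - i)) (min n (p - n)) with hm
  have hset : (Finset.Icc 1 (p - 1)).filter (fun j => adjCond p n i j)
      = (Finset.range m).image (fun k => a + 1 + 2 * k) := by
    ext j
    simp only [Finset.mem_filter, Finset.mem_Icc, Finset.mem_image, Finset.mem_range,
      adjCond, Nat.odd_iff]
    constructor
    · rintro ⟨⟨h1, h2⟩, hpar, h3, h4, h5⟩
      exact ⟨(j - a - 1) / 2, by omega, by omega⟩
    · rintro ⟨k, hk, rfl⟩
      refine ⟨⟨by omega, by omega⟩, by omega, by omega, by omega, by omega⟩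
  rw [hset, Finset.card_image_of_injective _ (fun x y h => by omega), Finset.card_range]
end

section
/- Let $p$ be an odd prime, $2\leq n\leq p-2$, and $1\leq i\leq p-1$. The sum of all $j\in\{1,\dots,p-1\}$ satisfying ($i+j+n$ odd, $i+j+n<2p$, $n<i+j$, $i<j+n$, $j<n+i$) equals $in$ if $i+n\leq p$, and equals $(p-i)(p-n)$ if $i+n\geq p$. -/
lemma sum_ap_aux (a m : ℕ) : ∑ k ∈ Finset.range m, (a + 2*k) = m*a + m*(m-1) := by
  induction m with
  | zero => simp
  | succ t ih =>
    rw [Finset.sum_range_succ, ih]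
    cases t with
    | zero => simp
    | succ s =>
      simp only [Nat.succ_sub_one]
      ring

lemma sum_filter_eq_aux (p n i a m : ℕ)
    (hmem : ∀ j, ((1 ≤ j ∧ j ≤ p - 1) ∧ adjCond p n i j) ↔ ∃ k, k < m ∧ j = a + 2*k) :
    ∑ j ∈ (Finset.Icc 1 (p - 1)).filter (fun j => adjCond p n i j), j
      = m*a + m*(m-1) := by
  have himg : (Finset.Icc 1 (p - 1)).filter (fun j => adjCond p n i j)
      = (Finset.range m).image (fun k => a + 2*k) := by
    ext j
    rw [Finset.mem_filter, Finset.mem_image, Finset.mem_Icc]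
    constructor
    · intro h
      obtain ⟨k, hk, rfl⟩ := (hmem j).1 ⟨⟨h.1.1, h.1.2⟩, h.2⟩
      exact ⟨k, Finset.mem_range.2 hk, rfl⟩
    · rintro ⟨k, hk, rfl⟩
      obtain ⟨h1, h2⟩ := (hmem _).2 ⟨k, Finset.mem_range.1 hk, rfl⟩
      exact ⟨⟨h1.1, h1.2⟩, h2⟩
  rw [himg, Finset.sum_image (by intro x _ y _ h; simp only at h; omega)]
  exact sum_ap_aux a m

theorem sum_of_neighbours (p n i : ℕ) (hp : p.Prime) (hodd : Odd p)
    (hn1 : 2 ≤ n) (hn2 : n ≤ p - 2) (hi1 : 1 ≤ i) (hi2 : i ≤ p - 1) :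
    (i + n ≤ p → ∑ j ∈ (Finset.Icc 1 (p - 1)).filter (fun j => adjCond p n i j), j
        = i * n) ∧
    (p ≤ i + n → ∑ j ∈ (Finset.Icc 1 (p - 1)).filter (fun j => adjCond p n i j), j
        = (p - i) * (p - n)) := by
  have hp2 : p % 2 = 1 := Nat.odd_iff.mp hodd
  have hp0 : 2 ≤ p := hp.two_le
  have hp3 : 3 ≤ p := by omega
  constructor
  · intro hle
    rcases le_total i n with hin | hin
    · -- a = n - i + 1, m = i
      have hmem : ∀ j, ((1 ≤ j ∧ j ≤ p - 1) ∧ adjCond p n i j)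
          ↔ ∃ k, k < i ∧ j = (n - i + 1) + 2*k := by
        intro j
        unfold adjCond
        rw [Nat.odd_iff]
        constructor
        · rintro ⟨⟨hj1, hj2⟩, hO, hb, hc, hd, he⟩
          exact ⟨(j - (n - i + 1))/2, by omega⟩
        · rintro ⟨k, hk, rfl⟩
          exact ⟨⟨by omega, by omega⟩, by omega, by omega, by omega, by omega, by omega⟩
      rw [sum_filter_eq_aux p n i (n - i + 1) i hmem]
      zify [hin, hi1]
      ring
    · -- a = i - n + 1, m = n
      have hmem : ∀ j, ((1 ≤ j ∧ j ≤ p - 1) ∧ adjCond p n i j)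
          ↔ ∃ k, k < n ∧ j = (i - n + 1) + 2*k := by
        intro j
        unfold adjCond
        rw [Nat.odd_iff]
        constructor
        · rintro ⟨⟨hj1, hj2⟩, hO, hb, hc, hd, he⟩
          exact ⟨(j - (i - n + 1))/2, by omega⟩
        · rintro ⟨k, hk, rfl⟩
          exact ⟨⟨by omega, by omega⟩, by omega, by omega, by omega, by omega, by omega⟩
      rw [sum_filter_eq_aux p n i (i - n + 1) n hmem]
      zify [hin, hn1, show 1 ≤ n by omega]
      ring
  · intro hle
    rcases le_total i n with hin | hin
    · -- a = n - i + 1, m = p - n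
      have hmem : ∀ j, ((1 ≤ j ∧ j ≤ p - 1) ∧ adjCond p n i j)
          ↔ ∃ k, k < p - n ∧ j = (n - i + 1) + 2*k := by
        intro j
        unfold adjCond
        rw [Nat.odd_iff]
        constructor
        · rintro ⟨⟨hj1, hj2⟩, hO, hb, hc, hd, he⟩
          exact ⟨(j - (n - i + 1))/2, by omega⟩
        · rintro ⟨k, hk, rfl⟩
          exact ⟨⟨by omega, by omega⟩, by omega, by omega, by omega, by omega, by omega⟩
      rw [sum_filter_eq_aux p n i (n - i + 1) (p - n) hmem]
      zify [hin, show n ≤ p by omega, show i ≤ p by omega, show 1 ≤ p - n by omega]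
      ring
    · -- a = i - n + 1, m = p - i
      have hmem : ∀ j, ((1 ≤ j ∧ j ≤ p - 1) ∧ adjCond p n i j)
          ↔ ∃ k, k < p - i ∧ j = (i - n + 1) + 2*k := by
        intro j
        unfold adjCond
        rw [Nat.odd_iff]
        constructor
        · rintro ⟨⟨hj1, hj2⟩, hO, hb, hc, hd, he⟩
          exact ⟨(j - (i - n + 1))/2, by omega⟩
        · rintro ⟨k, hk, rfl⟩
          exact ⟨⟨by omega, by omega⟩, by omega, by omega, by omega, by omega, by omega⟩
      rw [sum_filter_eq_aux p n i (i - n + 1) (p - i) hmem]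
      zify [hin, show n ≤ p by omega, show i ≤ p by omega, show 1 ≤ p - i by omega]
      ring
end

section
/- Let $p$ be an odd prime and $1<n<p-1$. Set $r=n$ if $n$ is odd and $r=p-n$ if $n$ is even, and define the graph $\bar{\mathcal{G}}$ on $\{1,\dots,(p-1)/2\}$ with $i\sim j$ iff $2|i-j|<r<2(i+j-1)<2p-r$. Then $\bar{\mathcal{G}}$ is connected. -/
/-- Adjacency in the half-size graph `𝒢̄`: `i ∼ j` iff `2|i-j| < r < 2(i+j-1) < 2p - r`. -/
def adjBar (p r i j : ℕ) : Prop :=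
  2 * ((i : ℤ) - (j : ℤ)).natAbs < r ∧ r < 2 * (i + j - 1) ∧ 2 * (i + j - 1) < 2 * p - r

theorem barGraph_connected (p n : ℕ) (hp : p.Prime) (hodd : Odd p)
    (hn1 : 1 < n) (hn2 : n < p - 1) :
    ∀ i j : ℕ, 1 ≤ i → i ≤ (p - 1) / 2 → 1 ≤ j → j ≤ (p - 1) / 2 →
      Relation.ReflTransGen (adjBar p (if Odd n then n else p - n)) i j := by
  intro i j hi1 him hj1 hjm
  set r := if Odd n then n else p - n with hr
  have hodd_r : Odd r := by
    by_cases h : Odd n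
    · simpa [hr, h]
    · simp only [hr, if_neg h]
      exact Nat.Odd.sub_even (by omega) hodd (Nat.not_odd_iff_even.mp h)
  have hrange : 2 ≤ r ∧ r ≤ p - 2 := by
    by_cases h : Odd n
    · simp only [hr, if_pos h]
      obtain ⟨t, ht⟩ := h
      omega
    · simp only [hr, if_neg h]
      omega
  obtain ⟨s, hs⟩ := hodd_r
  obtain ⟨t, ht⟩ := hodd
  have hsym : ∀ a b, adjBar p r a b → adjBar p r b a := by
    intro a b
    unfold adjBar
    omega
  have key : ∀ k, 1 ≤ k → k ≤ (p - 1) / 2 → Relation.ReflTransGen (adjBar p r) k 1 := by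
    intro k
    induction k using Nat.strong_induction_on with
    | _ k ih =>
      intro hk1 hkm
      rcases Nat.lt_or_ge k 2 with h1 | h1
      · have : k = 1 := by omega
        subst this
        exact Relation.ReflTransGen.refl
      · by_cases hcase : k ≤ s + 1
        · have e1 : adjBar p r k (s + 3 - k) := by
            unfold adjBar; omega
          have e2 : adjBar p r (s + 3 - k) (k - 1) := by
            unfold adjBar; omega
          exact Relation.ReflTransGen.head e1 (Relation.ReflTransGen.head e2
            (ih (k - 1) (by omega) (by omega) (by omega)))
        · have e3 : adjBar p r k (k - s) := by
            unfold adjBar; omega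
          exact Relation.ReflTransGen.head e3 (ih (k - s) (by omega) (by omega) (by omega))
  have hij := key i hi1 him
  have hji := key j hj1 hjm
  haveI : Std.Symm (adjBar p r) := ⟨hsym⟩
  exact hij.trans (Std.Symm.symm _ _ hji)
end

section
/- Let $p$ be an odd prime and $1<n<p-1$, and set $r=n$ if $n$ is odd, $r=p-n$ if $n$ is even. For $1\leq i,j\leq (p-1)/2$, define $\bar{A}^{(n)}_{i,j}=A^{(n)}_{2i-1,2j-1}$ if $n$ is odd and $\bar{A}^{(n)}_{i,j}=A^{(n)}_{2i-1,p+1-2j}$ if $n$ is even, where $A^{(n)}_{a,b}=1$ iff ($a+b+n$ odd, $a+b+n<2p$, $n<a+b$, $a<b+n$, $b<n+a$). Then $\bar{A}^{(n)}_{i,j}=1$ if and only if $2|i-j|<r<2(i+j-1)<2p-r$; consequently $\bar{A}^{(n)}$ is symmetric and $\bar{A}^{(p-n)}=\bar{A}^{(n)}$. -/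
/-- The condition for `V_b` to be a non-projective summand of `V_a ⊗ V_n`. -/
def condA (p n a b : ℕ) : Prop :=
  Odd (a + b + n) ∧ a + b + n < 2 * p ∧ n < a + b ∧ a < b + n ∧ b < n + a

/-- The entries of the half-size matrix `Ā⁽ⁿ⁾`: `Ā⁽ⁿ⁾_{i,j} = A⁽ⁿ⁾_{2i-1,2j-1}`
for `n` odd, and `Ā⁽ⁿ⁾_{i,j} = A⁽ⁿ⁾_{2i-1,p+1-2j}` for `n` even. -/
def condAbar (p n i j : ℕ) : Prop :=
  if Odd n then condA p n (2 * i - 1) (2 * j - 1) else condA p n (2 * i - 1) (p + 1 - 2 * j)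

theorem condAbar_characterisation (p n : ℕ) (hp : p.Prime) (hodd : Odd p)
    (hn1 : 1 < n) (hn2 : n < p - 1) (r : ℕ) (hr : r = if Odd n then n else p - n)
    (i j : ℕ) (hi1 : 1 ≤ i) (hi2 : i ≤ (p - 1) / 2) (hj1 : 1 ≤ j) (hj2 : j ≤ (p - 1) / 2) :
    (condAbar p n i j ↔
      (2 * ((i : ℤ) - (j : ℤ)).natAbs < r ∧ r < 2 * (i + j - 1) ∧
        2 * (i + j - 1) < 2 * p - r)) ∧
    (condAbar p n i j ↔ condAbar p n j i) ∧
    (condAbar p (p - n) i j ↔ condAbar p n i j) := by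
  have hp2 : 2 ≤ p := hp.two_le
  have hpodd : p % 2 = 1 := Nat.odd_iff.mp hodd
  by_cases hn : Odd n
  · have hn' : n % 2 = 1 := Nat.odd_iff.mp hn
    have hpn : ¬ Odd (p - n) := by rw [Nat.odd_iff]; omega
    have hr' : r = n := by rw [hr, if_pos hn]
    have h1 : (p - n) % 2 = 0 := by omega
    simp only [condAbar, condA, if_pos hn, if_neg hpn, Nat.odd_iff, hn', h1,
      reduceIte, Nat.one_ne_zero, Nat.zero_ne_one]
    omega
  · have hn' : n % 2 = 0 := Nat.even_iff.mp (Nat.not_odd_iff_even.mp hn)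
    have hpn : Odd (p - n) := by rw [Nat.odd_iff]; omega
    have hr' : r = p - n := by rw [hr, if_neg hn]
    have h1 : (p - n) % 2 = 1 := by omega
    simp only [condAbar, condA, if_pos hpn, if_neg hn, Nat.odd_iff, hn', h1,
      reduceIte, Nat.one_ne_zero, Nat.zero_ne_one]
    omega
end
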